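/- BSC–BEC KL sandwich with matched χ²-parameter: for p, q ∈ (0,1) and δ ∈ [0,1/2], with δ_eff defined by (1−2δ_eff)² = η for any η ∈ [0,1] satisfying η = (1−2δ)², one has d(p∗δ_eff ‖ q∗δ_eff) ≤ d(p∗δ ‖ q∗δ) ≤ (1−2δ)²·d(p‖q). More generally, for a random Δ ∈ [0,1/2]: d(p∗δ_eff ‖ q∗δ_eff) ≤ E[d(p∗Δ ‖ q∗Δ)] ≤ E[(1−2Δ)²]·d(p‖q) where (1−2δ_eff)² = E[(1−2Δ)²]. -/

import Mathlib

/-- Binary convolution: `a ∗ b = a(1-b) + (1-a)b`. -/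
noncomputable def bconv (a b : ℝ) : ℝ := a * (1 - b) + (1 - a) * b

/-- Binary KL divergence `d(a‖b) = a ln(a/b) + (1-a) ln((1-a)/(1-b))`. -/
noncomputable def bkl (a b : ℝ) : ℝ :=
  a * Real.log (a / b) + (1 - a) * Real.log ((1 - a) / (1 - b))

open Real

/-- Odd log series: `∑ u^(2m+1)/(2m+1) = (log(1+u) - log(1-u))/2`. -/
lemma oddLogSeries {u : ℝ} (h : |u| < 1) :
    HasSum (fun m : ℕ => u ^ (2*m+1) / (2*m+1)) ((Real.log (1+u) - Real.log (1-u)) / 2) := by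
  have h2 := (hasSum_log_sub_log_of_abs_lt_one h).div_const 2
  convert h2 using 2 with m
  · rfl
  · ring

/-- Even log series: `∑_{m≥0} u^(2m+2)/(2m+2) = -(log(1-u)+log(1+u))/2`. -/
lemma evenLogSeries {u : ℝ} (h : |u| < 1) :
    HasSum (fun m : ℕ => u ^ (2*m+2) / (2*m+2)) (-(Real.log (1-u) + Real.log (1+u)) / 2) := by
  have hneg : |(-u)| < 1 := by rwa [abs_neg]
  have h1 := hasSum_pow_div_log_of_abs_lt_one h
  have h2 := hasSum_pow_div_log_of_abs_lt_one hneg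
  have h3 := (h1.add h2).div_const 2
  rw [sub_neg_eq_add] at h3
  set f : ℕ → ℝ := fun n => (u ^ (n+1) / (n+1) + (-u) ^ (n+1) / (n+1)) / 2 with hf
  have hinj : Function.Injective (fun m : ℕ => 2*m+1) := by
    intro a b hab
    simp only at hab
    omega
  have hsupp : ∀ x ∉ Set.range (fun m : ℕ => 2*m+1), f x = 0 := by
    intro x hx
    have hxe : Even x := by
      rcases Nat.even_or_odd x with he | ho
      · exact he
      · refine absurd ?_ hx
        obtain ⟨k, hk⟩ := ho
        exact ⟨k, by simp only; omega⟩
    have hodd : Odd (x+1) := Even.add_one hxe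
    rw [hf]
    simp only
    rw [Odd.neg_pow hodd]
    ring
  have h4 : HasSum (f ∘ fun m : ℕ => 2*m+1) ((-log (1-u) + -log (1+u)) / 2) :=
    (hinj.hasSum_iff hsupp).2 h3
  have hfun : (f ∘ fun m : ℕ => 2*m+1) = fun m : ℕ => u ^ (2*m+2) / (2*m+2) := by
    funext m
    simp only [Function.comp, hf]
    rw [show 2*m+1+1 = 2*m+2 by ring, Even.neg_pow ⟨m+1, by ring⟩]
    push_cast
    ring
  rw [hfun] at h4
  convert h4 using 1
  ring

/-- Series expansion of binary KL in the "gap" variables. -/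
lemma bkl_hasSum {x y : ℝ} (hx : |x| < 1) (hy : |y| < 1) :
    HasSum (fun m : ℕ => x * (x ^ (2*m+1) / (2*m+1)) - x * (y ^ (2*m+1) / (2*m+1))
        - (x ^ (2*m+2) / (2*m+2) - y ^ (2*m+2) / (2*m+2)))
      (bkl ((1-x)/2) ((1-y)/2)) := by
  have h1x : (0:ℝ) < 1 - x := by cases abs_lt.1 hx; linarith
  have h2x : (0:ℝ) < 1 + x := by cases abs_lt.1 hx; linarith
  have h1y : (0:ℝ) < 1 - y := by cases abs_lt.1 hy; linarith
  have h2y : (0:ℝ) < 1 + y := by cases abs_lt.1 hy; linarith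
  have H := (((oddLogSeries hx).mul_left x).sub ((oddLogSeries hy).mul_left x)).sub
      ((evenLogSeries hx).sub (evenLogSeries hy))
  convert H using 1
  · rfl
  have e1 : ((1-x)/2) / ((1-y)/2) = (1-x)/(1-y) := by
    field_simp
  have e2 : (1 - (1-x)/2) / (1 - (1-y)/2) = (1+x)/(1+y) := by
    rw [show (1:ℝ) - (1-x)/2 = (1+x)/2 by ring, show (1:ℝ) - (1-y)/2 = (1+y)/2 by ring]
    field_simp
  rw [bkl, e1, e2, show (1:ℝ) - (1-x)/2 = (1+x)/2 by ring,
    Real.log_div h1x.ne' h1y.ne', Real.log_div h2x.ne' h2y.ne']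
  ring

/-- Coefficients of the KL series as a power series in `s = t²`. -/
noncomputable def klCoeff (a b : ℝ) (m : ℕ) : ℝ :=
  a ^ (2*m+2) / (2*m+1) - a * b ^ (2*m+1) / (2*m+1)
    - (a ^ (2*m+2) / (2*m+2) - b ^ (2*m+2) / (2*m+2))

lemma g_hasSum {a b : ℝ} (ha : |a| < 1) (hb : |b| < 1) {s : ℝ} (hs0 : 0 ≤ s) (hs1 : s ≤ 1) :
    HasSum (fun m : ℕ => klCoeff a b m * s ^ (m+1))
      (bkl ((1 - a * Real.sqrt s)/2) ((1 - b * Real.sqrt s)/2)) := by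
  set t := Real.sqrt s with htdef
  have ht0 : 0 ≤ t := Real.sqrt_nonneg s
  have ht1 : t ≤ 1 := by
    rw [htdef, show (1:ℝ) = Real.sqrt 1 by simp]
    exact Real.sqrt_le_sqrt hs1
  have ht2 : t ^ 2 = s := Real.sq_sqrt hs0
  have hx : |a * t| < 1 := by
    rw [abs_mul, abs_of_nonneg ht0]
    calc |a| * t ≤ |a| * 1 := by gcongr
    _ < 1 := by rwa [mul_one]
  have hy : |b * t| < 1 := by
    rw [abs_mul, abs_of_nonneg ht0]
    calc |b| * t ≤ |b| * 1 := by gcongr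
    _ < 1 := by rwa [mul_one]
  have H := bkl_hasSum hx hy
  have hfun : ∀ m : ℕ, (a*t) * ((a*t) ^ (2*m+1) / (2*m+1)) - (a*t) * ((b*t) ^ (2*m+1) / (2*m+1))
        - ((a*t) ^ (2*m+2) / (2*m+2) - (b*t) ^ (2*m+2) / (2*m+2))
      = klCoeff a b m * s ^ (m+1) := by
    intro m
    rw [klCoeff, ← ht2]
    have hK : ((2*m+1 : ℕ) : ℝ) ≠ 0 := by positivity
    field_simp
    ring
  exact H.congr_fun fun m => (hfun m).symm

/-- Tangent-line inequality for even powers. -/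
lemma even_pow_tangent (m : ℕ) (a b : ℝ) :
    (2*m+2 : ℝ) * (a * b ^ (2*m+1)) ≤ a ^ (2*m+2) + (2*m+1 : ℝ) * b ^ (2*m+2) := by
  have hderiv : ∀ x : ℝ, HasDerivAt (fun x : ℝ => x ^ (2*m+2)) ((2*m+2 : ℝ) * x ^ (2*m+1)) x := by
    intro x
    have := hasDerivAt_pow (2*m+2) x
    simpa [show 2*m+2-1 = 2*m+1 by omega] using this
  have hmono := (odd_two_mul_add_one (m : ℕ)).strictMono_pow (R := ℝ)
  rcases lt_trichotomy a b with hab | hab | hab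
  · obtain ⟨c, hc, hc'⟩ := exists_hasDerivAt_eq_slope (fun x : ℝ => x ^ (2*m+2))
      (fun x => (2*m+2 : ℝ) * x ^ (2*m+1)) hab
      ((continuous_pow _).continuousOn) (fun x _ => hderiv x)
    have hcb : c ^ (2*m+1) ≤ b ^ (2*m+1) := (hmono.monotone hc.2.le)
    have hba : (0:ℝ) < b - a := by linarith
    have heq : b ^ (2*m+2) - a ^ (2*m+2) = (2*m+2 : ℝ) * c ^ (2*m+1) * (b - a) := by
      field_simp at hc'
      linarith [hc']
    have step : (2*(m:ℝ)+2) * c ^ (2*m+1) * (b-a) ≤ (2*(m:ℝ)+2) * b ^ (2*m+1) * (b-a) := by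
      have h2 : (0:ℝ) ≤ 2*(m:ℝ)+2 := by positivity
      have h3 := mul_le_mul_of_nonneg_left hcb h2
      exact mul_le_mul_of_nonneg_right h3 hba.le
    have expand : (2*(m:ℝ)+2) * b ^ (2*m+1) * (b-a)
        = (2*(m:ℝ)+2) * b ^ (2*m+2) - (2*(m:ℝ)+2) * (a * b ^ (2*m+1)) := by ring
    linarith [heq, step, expand]
  · subst hab
    have : (2*m+2 : ℝ) * (a * a ^ (2*m+1)) = a ^ (2*m+2) + (2*m+1 : ℝ) * a ^ (2*m+2) := by
      rw [show a ^ (2*m+2) = a * a ^ (2*m+1) by rw [← pow_succ']]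
      ring
    linarith [this.le]
  · obtain ⟨c, hc, hc'⟩ := exists_hasDerivAt_eq_slope (fun x : ℝ => x ^ (2*m+2))
      (fun x => (2*m+2 : ℝ) * x ^ (2*m+1)) hab
      ((continuous_pow _).continuousOn) (fun x _ => hderiv x)
    have hcb : b ^ (2*m+1) ≤ c ^ (2*m+1) := (hmono.monotone hc.1.le)
    have hba : (0:ℝ) < a - b := by linarith
    have heq : a ^ (2*m+2) - b ^ (2*m+2) = (2*m+2 : ℝ) * c ^ (2*m+1) * (a - b) := by
      field_simp at hc'
      linarith [hc']
    have step : (2*(m:ℝ)+2) * b ^ (2*m+1) * (a-b) ≤ (2*(m:ℝ)+2) * c ^ (2*m+1) * (a-b) := by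
      have h2 : (0:ℝ) ≤ 2*(m:ℝ)+2 := by positivity
      have h3 := mul_le_mul_of_nonneg_left hcb h2
      exact mul_le_mul_of_nonneg_right h3 hba.le
    have expand : (2*(m:ℝ)+2) * b ^ (2*m+1) * (a-b)
        = (2*(m:ℝ)+2) * (a * b ^ (2*m+1)) - (2*(m:ℝ)+2) * b ^ (2*m+2) := by ring
    linarith [heq, step, expand]

lemma klCoeff_nonneg (a b : ℝ) (m : ℕ) : 0 ≤ klCoeff a b m := by
  have hK : (0:ℝ) < 2*m+1 := by positivity
  have hL : (0:ℝ) < 2*m+2 := by positivity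
  have key := even_pow_tangent m a b
  have hrep : klCoeff a b m
      = (a ^ (2*m+2) - (2*(m:ℝ)+2) * (a * b ^ (2*m+1)) + (2*(m:ℝ)+1) * b ^ (2*m+2))
        / ((2*(m:ℝ)+1) * (2*(m:ℝ)+2)) := by
    rw [klCoeff]
    field_simp
    ring
  rw [hrep]
  apply div_nonneg _ (by positivity)
  linarith [key]

/-- BSC–BEC KL sandwich with matched χ²-parameter: if `Δ` is a (finitely supported)
random variable in `[0,1/2]` with weights `w`, `η = E[(1-2Δ)²]` and
`δ_eff = (1-√η)/2`, then for `p, q ∈ (0,1)`: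
`d(p∗δ_eff ‖ q∗δ_eff) ≤ E[d(p∗Δ ‖ q∗Δ)] ≤ η·d(p‖q)`. -/
theorem kl_sandwich_matched_chiSq {ι : Type*} [Fintype ι]
    (w : ι → ℝ) (Δ : ι → ℝ)
    (hw : ∀ i, 0 ≤ w i) (hsum : ∑ i, w i = 1)
    (hΔ : ∀ i, Δ i ∈ Set.Icc (0:ℝ) (1/2))
    (η δeff : ℝ) (hη : η = ∑ i, w i * (1 - 2 * Δ i) ^ 2)
    (hδeff : δeff = (1 - Real.sqrt η) / 2)
    (p q : ℝ) (hp : p ∈ Set.Ioo (0:ℝ) 1) (hq : q ∈ Set.Ioo (0:ℝ) 1) :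
    bkl (bconv p δeff) (bconv q δeff) ≤ ∑ i, w i * bkl (bconv p (Δ i)) (bconv q (Δ i)) ∧
    ∑ i, w i * bkl (bconv p (Δ i)) (bconv q (Δ i)) ≤ η * bkl p q := by
  obtain ⟨hp0, hp1⟩ := hp
  obtain ⟨hq0, hq1⟩ := hq
  have ha : |1 - 2*p| < 1 := abs_lt.2 ⟨by linarith, by linarith⟩
  have hb : |1 - 2*q| < 1 := abs_lt.2 ⟨by linarith, by linarith⟩
  set s : ι → ℝ := fun i => (1 - 2 * Δ i) ^ 2 with hsdef
  have hs0 : ∀ i, 0 ≤ s i := fun i => sq_nonneg _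
  have hgap : ∀ i, 0 ≤ 1 - 2 * Δ i := fun i => by linarith [(hΔ i).2]
  have hs1 : ∀ i, s i ≤ 1 := fun i =>
    pow_le_one₀ (hgap i) (by linarith [(hΔ i).1])
  have hη0 : 0 ≤ η := by
    rw [hη]
    exact Finset.sum_nonneg fun i _ => mul_nonneg (hw i) (hs0 i)
  have hη1 : η ≤ 1 := by
    rw [hη]
    calc ∑ i, w i * s i ≤ ∑ i, w i := Finset.sum_le_sum fun i _ =>
          mul_le_of_le_one_right (hw i) (hs1 i)
    _ = 1 := hsum
  -- bridge equalities
  have hbc : ∀ r : ℝ, bconv r δeff = (1 - (1 - 2*r) * Real.sqrt η) / 2 := by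
    intro r
    rw [bconv, hδeff]
    ring
  have hsqrt : ∀ i, Real.sqrt (s i) = 1 - 2 * Δ i := fun i => Real.sqrt_sq (hgap i)
  have hbci : ∀ (r : ℝ) (i : ι), bconv r (Δ i) = (1 - (1 - 2*r) * Real.sqrt (s i)) / 2 := by
    intro r i
    rw [hsqrt i, bconv]
    ring
  -- the three relevant power series
  have Gη := g_hasSum ha hb hη0 hη1
  rw [← hbc p, ← hbc q] at Gη
  have Gi : ∀ i, HasSum (fun m : ℕ => klCoeff (1-2*p) (1-2*q) m * (s i) ^ (m+1))
      (bkl (bconv p (Δ i)) (bconv q (Δ i))) := by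
    intro i
    have := g_hasSum ha hb (hs0 i) (hs1 i)
    rwa [← hbci p i, ← hbci q i] at this
  have G1 : HasSum (fun m : ℕ => klCoeff (1-2*p) (1-2*q) m * (1:ℝ) ^ (m+1)) (bkl p q) := by
    have := g_hasSum ha hb (zero_le_one) (le_refl (1:ℝ))
    rwa [Real.sqrt_one, show (1 - (1-2*p)*1)/2 = p by ring,
      show (1 - (1-2*q)*1)/2 = q by ring] at this
  constructor
  · -- lower bound via Jensen (termwise convexity of x ↦ x^(m+1))
    have hS : HasSum (fun m : ℕ => ∑ i, w i * (klCoeff (1-2*p) (1-2*q) m * (s i) ^ (m+1)))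
        (∑ i, w i * bkl (bconv p (Δ i)) (bconv q (Δ i))) :=
      hasSum_sum fun i _ => (Gi i).mul_left (w i)
    refine hasSum_le (fun m => ?_) Gη hS
    have jensen : η ^ (m+1) ≤ ∑ i, w i * (s i) ^ (m+1) := by
      have hcx := (convexOn_pow (𝕜 := ℝ) (m+1)).map_sum_le (t := Finset.univ)
        (fun i _ => hw i) hsum (fun i _ => hs0 i)
      simp only [smul_eq_mul] at hcx
      rw [hη]
      exact hcx
    calc klCoeff (1-2*p) (1-2*q) m * η ^ (m+1)
        ≤ klCoeff (1-2*p) (1-2*q) m * ∑ i, w i * (s i) ^ (m+1) :=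
          mul_le_mul_of_nonneg_left jensen (klCoeff_nonneg _ _ m)
      _ = ∑ i, w i * (klCoeff (1-2*p) (1-2*q) m * (s i) ^ (m+1)) := by
          rw [Finset.mul_sum]
          exact Finset.sum_congr rfl fun i _ => by ring
  · -- upper bound: termwise s^(m+1) ≤ s
    have hup : ∀ i, bkl (bconv p (Δ i)) (bconv q (Δ i)) ≤ s i * bkl p q := by
      intro i
      refine hasSum_le (fun m => ?_) (Gi i) (G1.mul_left (s i))
      have hpow : (s i) ^ (m+1) ≤ s i := by
        calc (s i) ^ (m+1) = s i * (s i) ^ m := by rw [pow_succ']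
        _ ≤ s i * 1 := mul_le_mul_of_nonneg_left (pow_le_one₀ (hs0 i) (hs1 i)) (hs0 i)
        _ = s i := mul_one _
      calc klCoeff (1-2*p) (1-2*q) m * (s i) ^ (m+1)
          ≤ klCoeff (1-2*p) (1-2*q) m * s i :=
            mul_le_mul_of_nonneg_left hpow (klCoeff_nonneg _ _ m)
        _ = s i * (klCoeff (1-2*p) (1-2*q) m * (1:ℝ) ^ (m+1)) := by
            rw [one_pow]; ring
    calc ∑ i, w i * bkl (bconv p (Δ i)) (bconv q (Δ i))
        ≤ ∑ i, w i * (s i * bkl p q) := Finset.sum_le_sum fun i _ =>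
          mul_le_mul_of_nonneg_left (hup i) (hw i)
      _ = η * bkl p q := by
          rw [hη, Finset.sum_mul]
          exact Finset.sum_congr rfl fun i _ => by ring
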